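/- Let A and B be nonempty finite sets, Act a finite action set and AP a finite set of atomic propositions. Let P : A × Act × A → [0,1] satisfy Σ_{a'∈A} P(a,α,a') ∈ {0,1} for all a ∈ A, α ∈ Act; let u : A × Act × A × B → B be any (deterministic) update function, ι_A : A → [0,1] a distribution with Σ_a ι_A(a) = 1, b₀ ∈ B, and L_A : A → 2^AP. Define the MDP M₁ on state space A × B by Pr₁((a,b), α, (a',b')) = P(a,α,a') if b' = u(a,α,a',b) and 0 otherwise, with labeling L₁(a,b) = L_A(a) and initial distribution ι₁(a,b) = ι_A(a) if b = b₀ and 0 otherwise; and define the MDP M₂ on state space A by Pr₂ = P, L₂ = L_A, ι₂ = ι_A. Then the equivalence relation on (A × B) ⊎ A whose classes are the sets {a} ∪ ({a} × B) for a ∈ A is a probabilistic bisimulation on the disjoint-union MDP, and hence M₁ ≈ M₂. -/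

import Mathlib

/-- Total probability of moving from `s` under action `α` into the set of states `X`. -/
noncomputable def prSet {S Act : Type*} (P : S → Act → S → ℝ) (s : S) (α : Act) (X : Set S) : ℝ :=
  ∑' t : X, P s α t.1

/-- `R` is a probabilistic bisimulation w.r.t. the transition probabilities `P` and the
labeling `L`: it is an equivalence relation, related states carry the same label, and
related states move into every `R`-equivalence class with the same probability. -/
structure IsProbBisim {S Act AP : Type*} (P : S → Act → S → ℝ) (L : S → Set AP)
    (R : S → S → Prop) : Prop where
  equiv : Equivalence R
  label_eq : ∀ s s', R s s' → L s = L s'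
  pr_eq : ∀ s s', R s s' → ∀ (α : Act) (t : S),
    prSet P s α {u | R t u} = prSet P s' α {u | R t u}

/-- Transition probabilities of the disjoint-union MDP (componentwise, no cross transitions). -/
def unionPr {S₁ S₂ Act : Type*} (P₁ : S₁ → Act → S₁ → ℝ) (P₂ : S₂ → Act → S₂ → ℝ) :
    S₁ ⊕ S₂ → Act → S₁ ⊕ S₂ → ℝ
  | Sum.inl s, α, Sum.inl t => P₁ s α t
  | Sum.inr s, α, Sum.inr t => P₂ s α t
  | _, _, _ => 0

/-- Labeling of the disjoint-union MDP. -/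
def unionL {S₁ S₂ AP : Type*} (L₁ : S₁ → Set AP) (L₂ : S₂ → Set AP) : S₁ ⊕ S₂ → Set AP
  | Sum.inl s => L₁ s
  | Sum.inr s => L₂ s

/-- Two MDPs (given by transition probabilities, initial distributions and labelings) are
bisimilar (`M₁ ≈ M₂`) iff some probabilistic bisimulation on the disjoint-union MDP relates
them so that every equivalence class gets the same initial weight from both sides. -/
noncomputable def Bisimilar {S₁ S₂ Act AP : Type*}
    (P₁ : S₁ → Act → S₁ → ℝ) (ι₁ : S₁ → ℝ) (L₁ : S₁ → Set AP)
    (P₂ : S₂ → Act → S₂ → ℝ) (ι₂ : S₂ → ℝ) (L₂ : S₂ → Set AP) : Prop :=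
  ∃ R : S₁ ⊕ S₂ → S₁ ⊕ S₂ → Prop,
    IsProbBisim (unionPr P₁ P₂) (unionL L₁ L₂) R ∧
    ∀ t : S₁ ⊕ S₂,
      (∑' s : {s : S₁ // R (Sum.inl s) t}, ι₁ s.1) =
      (∑' s : {s : S₂ // R (Sum.inr s) t}, ι₂ s.1)

/-- Eliminating write-only state components: `M₁` runs `P` on the `A`-component and updates
the `B`-component deterministically via `u` (never reading it, except through `u` itself);
`M₂` is the projection to `A`. The equivalence relation identifying states with the same
`A`-component (classes `{a} ∪ {a} × B`) is a probabilistic bisimulation on the disjoint-union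
MDP, hence `M₁ ≈ M₂`. -/
theorem stmt7 {A B Act AP : Type*} [Fintype A] [Fintype B] [Nonempty A] [Nonempty B]
    [Fintype Act] [Fintype AP] [DecidableEq B]
    (P : A → Act → A → ℝ)
    (hP0 : ∀ a α a', 0 ≤ P a α a') (hP1 : ∀ a α a', P a α a' ≤ 1)
    (hPsum : ∀ a α, (∑ a', P a α a') = 0 ∨ (∑ a', P a α a') = 1)
    (u : A → Act → A → B → B)
    (ιA : A → ℝ) (hι0 : ∀ a, 0 ≤ ιA a) (hιsum : (∑ a, ιA a) = 1)
    (b₀ : B) (LA : A → Set AP) :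
    IsProbBisim
      (unionPr
        (fun (s : A × B) (α : Act) (t : A × B) =>
          if t.2 = u s.1 α t.1 s.2 then P s.1 α t.1 else 0)
        P)
      (unionL (fun s : A × B => LA s.1) LA)
      (fun v w => Sum.elim Prod.fst id v = Sum.elim Prod.fst id w) ∧
    Bisimilar
      (fun (s : A × B) (α : Act) (t : A × B) =>
        if t.2 = u s.1 α t.1 s.2 then P s.1 α t.1 else 0)
      (fun s : A × B => if s.2 = b₀ then ιA s.1 else 0)
      (fun s : A × B => LA s.1)
      P ιA LA := by
  classical
  -- abbreviations
  set P1 : (A × B) → Act → (A × B) → ℝ :=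
    fun s α t => if t.2 = u s.1 α t.1 s.2 then P s.1 α t.1 else 0 with hP1def
  set proj : (A × B) ⊕ A → A := Sum.elim Prod.fst id with hprojdef
  -- key computation: probability into a class is P (proj s) α c
  have key : ∀ (s : (A × B) ⊕ A) (α : Act) (c : A),
      prSet (unionPr P1 P) s α {w | proj w = c} = P (proj s) α c := by
    intro s α c
    have h1 : prSet (unionPr P1 P) s α {w | proj w = c}
        = ∑ t, Set.indicator {w | proj w = c} (unionPr P1 P s α) t := by
      rw [prSet, tsum_subtype, tsum_fintype]
    rw [h1, Fintype.sum_sum_type]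
    cases s with
    | inl s =>
      have h2 : ∀ a' : A, Set.indicator {w | proj w = c}
          (unionPr P1 P (Sum.inl s) α) (Sum.inr a') = 0 := by
        intro a'
        simp [Set.indicator_apply, unionPr]
      rw [Finset.sum_congr rfl (fun a' _ => h2 a'), Finset.sum_const_zero, add_zero]
      rw [Fintype.sum_prod_type]
      have h3 : ∀ a' : A, (∑ b' : B, Set.indicator {w | proj w = c}
          (unionPr P1 P (Sum.inl s) α) (Sum.inl (a', b')))
          = if a' = c then P s.1 α a' else 0 := by
        intro a'
        by_cases hc : a' = c
        · subst hc
          simp only [Set.indicator_apply, Set.mem_setOf_eq, hprojdef, Sum.elim_inl,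
            if_pos rfl, unionPr, hP1def]
          simp [Finset.sum_ite_eq']
        · simp [Set.indicator_apply, hprojdef, hc]
      rw [Finset.sum_congr rfl (fun a' _ => h3 a')]
      simp [hprojdef]
    | inr s =>
      have h2 : ∀ p : A × B, Set.indicator {w | proj w = c}
          (unionPr P1 P (Sum.inr s) α) (Sum.inl p) = 0 := by
        intro p
        simp [Set.indicator_apply, unionPr]
      rw [Finset.sum_congr rfl (fun p _ => h2 p), Finset.sum_const_zero, zero_add]
      have h3 : ∀ a' : A, Set.indicator {w | proj w = c}
          (unionPr P1 P (Sum.inr s) α) (Sum.inr a')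
          = if a' = c then P s α a' else 0 := by
        intro a'
        simp [Set.indicator_apply, hprojdef, unionPr]
        exact if_congr Iff.rfl rfl rfl
      rw [Finset.sum_congr rfl (fun a' _ => h3 a')]
      simp [hprojdef]
  have hbisim : IsProbBisim (unionPr P1 P) (unionL (fun s : A × B => LA s.1) LA)
      (fun v w => proj v = proj w) := by
    refine ⟨⟨fun _ => rfl, fun h => h.symm, fun h h' => h.trans h'⟩, ?_, ?_⟩
    · have hL : ∀ v : (A × B) ⊕ A, unionL (fun s : A × B => LA s.1) LA v = LA (proj v) := by
        rintro (⟨a, b⟩ | a) <;> rfl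
      intro v w h
      rw [hL, hL, h]
    · intro s s' h α t
      have hs := key s α (proj t)
      have hs' := key s' α (proj t)
      have hset : {w | proj t = proj w} = {w | proj w = proj t} := by
        ext w; exact ⟨Eq.symm, Eq.symm⟩
      rw [hset] at *
      rw [hs, hs', h]
  refine ⟨hbisim, ⟨fun v w => proj v = proj w, hbisim, ?_⟩⟩
  intro t
  set c := proj t with hc
  have hl : (∑' s : {s : A × B // proj (Sum.inl s) = c},
      (if s.1.2 = b₀ then ιA s.1.1 else 0)) = ιA c := by
    have e1 : (∑' s : {s : A × B // proj (Sum.inl s) = c},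
        (if s.1.2 = b₀ then ιA s.1.1 else 0))
        = ∑' s : A × B, Set.indicator {s : A × B | proj (Sum.inl s) = c}
            (fun s => if s.2 = b₀ then ιA s.1 else 0) s :=
      tsum_subtype {s : A × B | proj (Sum.inl s) = c}
        (fun s => if s.2 = b₀ then ιA s.1 else 0)
    rw [e1, tsum_fintype, Fintype.sum_prod_type]
    have h3 : ∀ a' : A, (∑ b' : B, Set.indicator {s : A × B | proj (Sum.inl s) = c}
        (fun s => if s.2 = b₀ then ιA s.1 else 0) (a', b'))
        = if a' = c then ιA a' else 0 := by
      intro a'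
      by_cases hac : a' = c
      · subst hac
        simp only [Set.indicator_apply, Set.mem_setOf_eq, hprojdef, Sum.elim_inl, if_pos rfl]
        simp [Finset.sum_ite_eq']
      · simp [Set.indicator_apply, hprojdef, hac]
    rw [Finset.sum_congr rfl (fun a' _ => h3 a')]
    simp
  have hr : (∑' s : {s : A // proj (Sum.inr s) = c}, ιA s.1) = ιA c := by
    have e1 : (∑' s : {s : A // proj (Sum.inr s) = c}, ιA s.1)
        = ∑' s : A, Set.indicator {s : A | proj (Sum.inr s) = c} ιA s :=
      tsum_subtype {s : A | proj (Sum.inr s) = c} ιA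
    rw [e1, tsum_fintype]
    have h3 : ∀ a' : A, Set.indicator {s : A | proj (Sum.inr s) = c} ιA a'
        = if a' = c then ιA a' else 0 := by
      intro a'
      simp [Set.indicator_apply, hprojdef]
    rw [Finset.sum_congr rfl (fun a' _ => h3 a')]
    simp
  exact hl.trans hr.symm
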